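/- The infinite hexagonal grid graph G satisfies χ'_st(G) = 4. -/

import Mathlib

open SimpleGraph

/-- A star edge-coloring with `k` colors: a proper edge-coloring (adjacent edges get distinct
colors) such that no path with four edges and no cycle with four edges is bichromatic. -/
def IsStarEdgeColoring {V : Type*} (G : SimpleGraph V) {k : ℕ} (C : Sym2 V → Fin k) : Prop :=
  (∀ e₁ ∈ G.edgeSet, ∀ e₂ ∈ G.edgeSet, e₁ ≠ e₂ → (∃ v, v ∈ e₁ ∧ v ∈ e₂) → C e₁ ≠ C e₂) ∧
  (∀ (u v : V) (w : G.Walk u v), w.length = 4 → w.IsPath →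
    ¬ ∃ a b : Fin k, ∀ e ∈ w.edges, C e = a ∨ C e = b) ∧
  (∀ (u : V) (w : G.Walk u u), w.length = 4 → w.IsCycle →
    ¬ ∃ a b : Fin k, ∀ e ∈ w.edges, C e = a ∨ C e = b)

/-- The star chromatic index: the least `k` admitting a star edge-coloring with `k` colors. -/
noncomputable def starChromaticIndex {V : Type*} (G : SimpleGraph V) : ℕ :=
  sInf {k | ∃ C : Sym2 V → Fin k, IsStarEdgeColoring G C}

/-- The infinite hexagonal (honeycomb) grid, in brick-wall coordinates on `ℤ × ℤ`:
vertical edges everywhere, and a horizontal edge from `(x, y)` to `(x + 1, y)` exactly when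
`x + y` is even, so that every vertex has degree 3 and all faces are hexagons. -/
def hexGrid : SimpleGraph (ℤ × ℤ) :=
  SimpleGraph.fromRel (fun p q =>
    (p.1 = q.1 ∧ q.2 = p.2 + 1) ∨ (p.2 = q.2 ∧ q.1 = p.1 + 1 ∧ Even (p.1 + p.2)))


/-! ### The explicit star 4-edge-coloring -/

def eV (x y : ℤ) : ℤ := 2 * (((x - y + 1) % 4) / 2) + 1 - y % 2
def eH (x y : ℤ) : ℤ := (x - y) % 4 + y % 2

def eF (p q : ℤ × ℤ) : ℤ :=
  if p.2 = q.2 then eH (min p.1 q.1) p.2 else eV (min p.1 q.1) (min p.2 q.2)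

lemma eF_symm (p q : ℤ × ℤ) : eF p q = eF q p := by
  unfold eF
  rcases eq_or_ne p.2 q.2 with h | h
  · rw [if_pos h, if_pos h.symm, h, min_comm]
  · rw [if_neg h, if_neg (Ne.symm h), min_comm p.1 q.1, min_comm p.2 q.2]

def hexCol (e : Sym2 (ℤ × ℤ)) : Fin 4 := ⟨(Sym2.lift ⟨eF, eF_symm⟩ e).toNat % 4, by omega⟩

lemma colV (x y : ℤ) : (hexCol s((x, y), (x, y + 1))).1 = (eV x y).toNat % 4 := by
  have : eF (x, y) (x, y + 1) = eV x y := by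
    unfold eF
    rw [if_neg (by dsimp only; omega)]
    dsimp only
    rw [min_self, min_eq_left (by omega)]
  simp [hexCol, this]

lemma colH (x y : ℤ) : (hexCol s((x, y), (x + 1, y))).1 = (eH x y).toNat % 4 := by
  have : eF (x, y) (x + 1, y) = eH x y := by
    unfold eF
    rw [if_pos rfl]
    dsimp only
    rw [min_eq_left (by omega)]
  simp [hexCol, this]

lemma adj_cases {x y a b : ℤ} (h : hexGrid.Adj (x, y) (a, b)) :
    (a = x ∧ b = y + 1) ∨ (a = x ∧ y = b + 1) ∨
    (b = y ∧ a = x + 1 ∧ (x + y) % 2 = 0) ∨ (b = y ∧ x = a + 1 ∧ (a + b) % 2 = 0) := by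
  simp [hexGrid, fromRel_adj, Int.even_iff, Prod.ext_iff] at h
  omega

lemma adj_up (x y : ℤ) : hexGrid.Adj (x, y) (x, y + 1) := by
  simp [hexGrid, fromRel_adj, Int.even_iff, Prod.ext_iff]
  all_goals omega

lemma adj_right (x y : ℤ) (h : (x + y) % 2 = 0) : hexGrid.Adj (x, y) (x + 1, y) := by
  simp [hexGrid, fromRel_adj, Int.even_iff, Prod.ext_iff]
  all_goals omega

lemma col_adj {x y a b : ℤ} (h : hexGrid.Adj (x, y) (a, b)) :
    (a = x ∧ b = y + 1 ∧ (hexCol s((x, y), (a, b))).1 = (eV x y).toNat % 4) ∨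
    (a = x ∧ y = b + 1 ∧ (hexCol s((x, y), (a, b))).1 = (eV x b).toNat % 4) ∨
    (b = y ∧ a = x + 1 ∧ (x + y) % 2 = 0 ∧ (hexCol s((x, y), (a, b))).1 = (eH x y).toNat % 4) ∨
    (b = y ∧ x = a + 1 ∧ (a + b) % 2 = 0 ∧ (hexCol s((x, y), (a, b))).1 = (eH a b).toNat % 4) := by
  rcases adj_cases h with ⟨h1, h2⟩ | ⟨h1, h2⟩ | ⟨h1, h2, hp⟩ | ⟨h1, h2, hp⟩
  · refine Or.inl ⟨h1, h2, ?_⟩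
    rw [h1, h2]; exact colV x y
  · refine Or.inr (Or.inl ⟨h1, h2, ?_⟩)
    rw [h1, h2, Sym2.eq_swap]; exact colV x b
  · refine Or.inr (Or.inr (Or.inl ⟨h1, h2, hp, ?_⟩))
    rw [h1, h2]; exact colH x y
  · refine Or.inr (Or.inr (Or.inr ⟨h1, h2, hp, ?_⟩))
    rw [h1, h2, Sym2.eq_swap]; exact colH a y

lemma hex_proper : ∀ e₁ ∈ hexGrid.edgeSet, ∀ e₂ ∈ hexGrid.edgeSet, e₁ ≠ e₂ →
    (∃ v, v ∈ e₁ ∧ v ∈ e₂) → hexCol e₁ ≠ hexCol e₂ := by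
  have key : ∀ (e : Sym2 (ℤ × ℤ)) (v), e ∈ hexGrid.edgeSet → v ∈ e →
      ∃ w, hexGrid.Adj v w ∧ e = s(v, w) := by
    intro e v he hv
    induction e with
    | _ p q =>
      rw [Sym2.mem_iff] at hv
      rw [mem_edgeSet] at he
      rcases hv with rfl | rfl
      · exact ⟨q, he, rfl⟩
      · exact ⟨p, he.symm, Sym2.eq_swap⟩
  rintro e₁ he₁ e₂ he₂ hne ⟨v, hv₁, hv₂⟩
  obtain ⟨w₁, hw₁, rfl⟩ := key e₁ v he₁ hv₁
  obtain ⟨w₂, hw₂, rfl⟩ := key e₂ v he₂ hv₂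
  have hww : w₁ ≠ w₂ := fun h => hne (by rw [h])
  obtain ⟨x, y⟩ := v
  obtain ⟨a₁, b₁⟩ := w₁
  obtain ⟨a₂, b₂⟩ := w₂
  have h₁ := col_adj hw₁
  have h₂ := col_adj hw₂
  intro hcc
  have hcc' : (hexCol s((x, y), (a₁, b₁))).1 = (hexCol s((x, y), (a₂, b₂))).1 := by rw [hcc]
  simp only [ne_eq, Prod.mk.injEq, not_and] at hww
  simp only [eV, eH] at h₁ h₂
  rcases h₁ with ⟨h,h',hc⟩|⟨h,h',hc⟩|⟨h,h',hpa,hc⟩|⟨h,h',hpa,hc⟩ <;>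
    rcases h₂ with ⟨g,g',gc⟩|⟨g,g',gc⟩|⟨g,g',gpa,gc⟩|⟨g,g',gpa,gc⟩ <;> omega

/-! ### Finite core for the bichromatic 4-path condition -/

def rv (x y : ℤ) : ℕ := ((x - y) % 4).toNat
def pv (y : ℤ) : ℕ := (y % 2).toNat

def stepR (r m : ℕ) : ℕ := if m = 1 ∨ m = 2 then (r + 1) % 4 else (r + 3) % 4
def stepP (p m : ℕ) : ℕ := if m ≤ 1 then 1 - p else p
def feas (r m : ℕ) : Prop := (m = 2 → r % 2 = 0) ∧ (m = 3 → r % 2 = 1)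
def colr (r p m : ℕ) : ℕ :=
  if m = 0 then 2 * (((r + 1) % 4) / 2) + 1 - p
  else if m = 1 then 2 * (((r + 2) % 4) / 2) + p
  else if m = 2 then r % 4 + p
  else (r + 3) % 4 + p
def nbOK (m m' : ℕ) : Prop :=
  ¬((m = 0 ∧ m' = 1) ∨ (m = 1 ∧ m' = 0) ∨ (m = 2 ∧ m' = 3) ∨ (m = 3 ∧ m' = 2))

instance (r m : ℕ) : Decidable (feas r m) := by unfold feas; infer_instance
instance (m m' : ℕ) : Decidable (nbOK m m') := by unfold nbOK; infer_instance

set_option maxHeartbeats 4000000 in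
lemma core_fin : ∀ (r : Fin 4) (p : Fin 2) (m1 m2 m3 m4 : Fin 4),
    feas r.1 m1.1 → feas (stepR r.1 m1.1) m2.1 → feas (stepR (stepR r.1 m1.1) m2.1) m3.1 →
    feas (stepR (stepR (stepR r.1 m1.1) m2.1) m3.1) m4.1 →
    nbOK m1.1 m2.1 → nbOK m2.1 m3.1 → nbOK m3.1 m4.1 →
    colr r.1 p.1 m1.1 = colr (stepR (stepR r.1 m1.1) m2.1) (stepP (stepP p.1 m1.1) m2.1) m3.1 →
    colr (stepR r.1 m1.1) (stepP p.1 m1.1) m2.1 =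
      colr (stepR (stepR (stepR r.1 m1.1) m2.1) m3.1)
        (stepP (stepP (stepP p.1 m1.1) m2.1) m3.1) m4.1 →
    False := by decide

lemma core (r p m1 m2 m3 m4 : ℕ) (hr : r < 4) (hp : p < 2)
    (h1 : m1 < 4) (h2 : m2 < 4) (h3 : m3 < 4) (h4 : m4 < 4)
    (hf1 : feas r m1) (hf2 : feas (stepR r m1) m2) (hf3 : feas (stepR (stepR r m1) m2) m3)
    (hf4 : feas (stepR (stepR (stepR r m1) m2) m3) m4)
    (hn1 : nbOK m1 m2) (hn2 : nbOK m2 m3) (hn3 : nbOK m3 m4)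
    (hp1 : colr r p m1 = colr (stepR (stepR r m1) m2) (stepP (stepP p m1) m2) m3)
    (hp2 : colr (stepR r m1) (stepP p m1) m2 =
      colr (stepR (stepR (stepR r m1) m2) m3) (stepP (stepP (stepP p m1) m2) m3) m4) :
    False :=
  core_fin ⟨r, hr⟩ ⟨p, hp⟩ ⟨m1, h1⟩ ⟨m2, h2⟩ ⟨m3, h3⟩ ⟨m4, h4⟩
    hf1 hf2 hf3 hf4 hn1 hn2 hn3 hp1 hp2

lemma step_bridge {x y a b : ℤ} (h : hexGrid.Adj (x, y) (a, b)) :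
    ∃ m : ℕ, m < 4 ∧
      (m = 0 ↔ (a = x ∧ b = y + 1)) ∧ (m = 1 ↔ (a = x ∧ y = b + 1)) ∧
      (m = 2 ↔ (b = y ∧ a = x + 1)) ∧ (m = 3 ↔ (b = y ∧ x = a + 1)) ∧
      feas (rv x y) m ∧ stepR (rv x y) m = rv a b ∧ stepP (pv y) m = pv b ∧
      (hexCol s((x, y), (a, b))).1 = colr (rv x y) (pv y) m := by
  have hne : ¬(a = x ∧ b = y) := by
    have := h.ne'
    simp only [ne_eq, Prod.mk.injEq, not_and] at this
    intro ⟨u1, u2⟩; exact this u1 u2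
  rcases col_adj h with ⟨h1, h2, hc⟩ | ⟨h1, h2, hc⟩ | ⟨h1, h2, hpar, hc⟩ | ⟨h1, h2, hpar, hc⟩
  · refine ⟨0, by omega, by omega, by omega, by omega, by omega, ?_, ?_, ?_, ?_⟩
    · simp [feas]
    · simp only [stepR, rv]; norm_num; omega
    · simp only [stepP, pv]; norm_num; omega
    · rw [hc]; simp only [colr, eV, rv, pv]; norm_num; omega
  · refine ⟨1, by omega, by omega, by omega, by omega, by omega, ?_, ?_, ?_, ?_⟩
    · simp [feas]
    · simp only [stepR, rv]; norm_num; omega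
    · simp only [stepP, pv]; norm_num; omega
    · rw [hc]; simp only [colr, eV, rv, pv]; norm_num; omega
  · refine ⟨2, by omega, by omega, by omega, by omega, by omega, ?_, ?_, ?_, ?_⟩
    · constructor
      · intro _; simp only [rv]; omega
      · omega
    · simp only [stepR, rv]; norm_num; omega
    · simp only [stepP, pv]; norm_num; omega
    · rw [hc]; simp only [colr, eH, rv, pv]; norm_num; omega
  · refine ⟨3, by omega, by omega, by omega, by omega, by omega, ?_, ?_, ?_, ?_⟩
    · constructor
      · omega
      · intro _; simp only [rv]; omega
    · simp only [stepR, rv]; norm_num; omega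
    · simp only [stepP, pv]; norm_num; omega
    · rw [hc]; simp only [colr, eH, rv, pv]; norm_num; omega


lemma nb_of {x0 y0 x1 y1 x2 y2 : ℤ} {m m' : ℕ}
    (ha : m = 0 ↔ (x1 = x0 ∧ y1 = y0 + 1)) (hb : m = 1 ↔ (x1 = x0 ∧ y0 = y1 + 1))
    (hc : m = 2 ↔ (y1 = y0 ∧ x1 = x0 + 1)) (hd : m = 3 ↔ (y1 = y0 ∧ x0 = x1 + 1))
    (ha' : m' = 0 ↔ (x2 = x1 ∧ y2 = y1 + 1)) (hb' : m' = 1 ↔ (x2 = x1 ∧ y1 = y2 + 1))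
    (hc' : m' = 2 ↔ (y2 = y1 ∧ x2 = x1 + 1)) (hd' : m' = 3 ↔ (y2 = y1 ∧ x1 = x2 + 1))
    (hne : x0 = x2 → ¬ y0 = y2) : nbOK m m' := by
  unfold nbOK
  rintro (⟨h1, h2⟩ | ⟨h1, h2⟩ | ⟨h1, h2⟩ | ⟨h1, h2⟩)
  · obtain ⟨u1, u2⟩ := ha.mp h1; obtain ⟨v1, v2⟩ := hb'.mp h2
    clear ha hb hc hd ha' hb' hc' hd'; omega
  · obtain ⟨u1, u2⟩ := hb.mp h1; obtain ⟨v1, v2⟩ := ha'.mp h2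
    clear ha hb hc hd ha' hb' hc' hd'; omega
  · obtain ⟨u1, u2⟩ := hc.mp h1; obtain ⟨v1, v2⟩ := hd'.mp h2
    clear ha hb hc hd ha' hb' hc' hd'; omega
  · obtain ⟨u1, u2⟩ := hd.mp h1; obtain ⟨v1, v2⟩ := hc'.mp h2
    clear ha hb hc hd ha' hb' hc' hd'; omega

lemma rv_lt (x y : ℤ) : rv x y < 4 := by simp only [rv]; omega
lemma pv_lt (y : ℤ) : pv y < 2 := by simp only [pv]; omega

set_option maxHeartbeats 4000000 in
lemma hex_star_path : ∀ (u v : ℤ × ℤ) (w : hexGrid.Walk u v), w.length = 4 → w.IsPath →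
    ¬ ∃ a b : Fin 4, ∀ e ∈ w.edges, hexCol e = a ∨ hexCol e = b := by
  rintro u v w hlen hp ⟨a, b, hab⟩
  cases w with
  | nil => simp at hlen
  | cons h1 w =>
  rename_i p1
  cases w with
  | nil => simp at hlen
  | cons h2 w =>
  rename_i p2
  cases w with
  | nil => simp at hlen
  | cons h3 w =>
  rename_i p3
  cases w with
  | nil => simp at hlen
  | cons h4 w =>
  cases w with
  | cons h5 w => simp [SimpleGraph.Walk.length_cons] at hlen
  | nil =>
  simp only [Walk.edges_cons, Walk.edges_nil, List.mem_cons, List.not_mem_nil, or_false] at hab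
  have hc1 := hab s(u, p1) (by tauto)
  have hc2 := hab s(p1, p2) (by tauto)
  have hc3 := hab s(p2, p3) (by tauto)
  have hc4 := hab s(p3, v) (by tauto)
  simp only [Walk.isPath_def, Walk.support_cons, Walk.support_nil, List.nodup_cons,
    List.mem_cons, List.mem_singleton, List.not_mem_nil, or_false, List.nodup_nil] at hp
  obtain ⟨hu, hq1, hq2, -, -⟩ := hp
  simp only [not_or] at hu hq1 hq2
  obtain ⟨hu1, hu2, hu3, hu4⟩ := hu
  obtain ⟨h12, h13, h14⟩ := hq1
  obtain ⟨h23, h24⟩ := hq2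
  have d12 : hexCol s(u, p1) ≠ hexCol s(p1, p2) :=
    hex_proper _ ((mem_edgeSet _).mpr h1) _ ((mem_edgeSet _).mpr h2)
      (by simp only [ne_eq, Sym2.eq_iff, Prod.swap_prod_mk, Prod.mk.injEq]; push_neg; tauto)
      ⟨p1, by simp, by simp⟩
  have d23 : hexCol s(p1, p2) ≠ hexCol s(p2, p3) :=
    hex_proper _ ((mem_edgeSet _).mpr h2) _ ((mem_edgeSet _).mpr h3)
      (by simp only [ne_eq, Sym2.eq_iff, Prod.swap_prod_mk, Prod.mk.injEq]; push_neg; tauto)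
      ⟨p2, by simp, by simp⟩
  have d34 : hexCol s(p2, p3) ≠ hexCol s(p3, v) :=
    hex_proper _ ((mem_edgeSet _).mpr h3) _ ((mem_edgeSet _).mpr h4)
      (by simp only [ne_eq, Sym2.eq_iff, Prod.swap_prod_mk, Prod.mk.injEq]; push_neg; tauto)
      ⟨p3, by simp, by simp⟩
  have hpat : (hexCol s(u, p1)).1 = (hexCol s(p2, p3)).1 ∧
      (hexCol s(p1, p2)).1 = (hexCol s(p3, v)).1 := by
    simp only [Fin.ext_iff] at hc1 hc2 hc3 hc4
    simp only [ne_eq, Fin.ext_iff] at d12 d23 d34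
    omega
  clear hc1 hc2 hc3 hc4 d12 d23 d34 hab
  obtain ⟨x0, y0⟩ := u
  obtain ⟨x1, y1⟩ := p1
  obtain ⟨x2, y2⟩ := p2
  obtain ⟨x3, y3⟩ := p3
  obtain ⟨x4, y4⟩ := v
  simp only [ne_eq, Prod.mk.injEq, not_and] at hu1 hu2 hu3 hu4 h12 h13 h14 h23 h24
  obtain ⟨m1, hl1, ha1, hb1, hd1, he1, hf1, hsr1, hsp1, hcol1⟩ := step_bridge h1
  obtain ⟨m2, hl2, ha2, hb2, hd2, he2, hf2, hsr2, hsp2, hcol2⟩ := step_bridge h2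
  obtain ⟨m3, hl3, ha3, hb3, hd3, he3, hf3, hsr3, hsp3, hcol3⟩ := step_bridge h3
  obtain ⟨m4, hl4, ha4, hb4, hd4, he4, hf4, hsr4, hsp4, hcol4⟩ := step_bridge h4
  have hn1 : nbOK m1 m2 := nb_of ha1 hb1 hd1 he1 ha2 hb2 hd2 he2 hu2
  have hn2 : nbOK m2 m3 := nb_of ha2 hb2 hd2 he2 ha3 hb3 hd3 he3 h13
  have hn3 : nbOK m3 m4 := nb_of ha3 hb3 hd3 he3 ha4 hb4 hd4 he4 h24
  refine core (rv x0 y0) (pv y0) m1 m2 m3 m4 (rv_lt _ _) (pv_lt _) hl1 hl2 hl3 hl4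
    hf1 ?_ ?_ ?_ hn1 hn2 hn3 ?_ ?_
  · rw [hsr1]; exact hf2
  · rw [hsr1, hsr2]; exact hf3
  · rw [hsr1, hsr2, hsr3]; exact hf4
  · rw [hsr1, hsr2, hsp1, hsp2, ← hcol1, ← hcol3]; exact hpat.1
  · rw [hsr1, hsr2, hsr3, hsp1, hsp2, hsp3, ← hcol2, ← hcol4]; exact hpat.2

set_option maxHeartbeats 1600000 in
lemma hex_no_4cycle : ∀ (u : ℤ × ℤ) (w : hexGrid.Walk u u), w.length = 4 → ¬ w.IsCycle := by
  intro u w hlen hcyc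
  cases w with
  | nil => simp at hlen
  | cons h1 w =>
  rename_i p1
  cases w with
  | nil => simp at hlen
  | cons h2 w =>
  rename_i p2
  cases w with
  | nil => simp at hlen
  | cons h3 w =>
  rename_i p3
  cases w with
  | nil => simp at hlen
  | cons h4 w =>
  cases w with
  | cons h5 w => simp [SimpleGraph.Walk.length_cons] at hlen
  | nil =>
  rw [Walk.isCycle_def] at hcyc
  obtain ⟨-, -, hnd⟩ := hcyc
  simp only [Walk.support_cons, Walk.support_nil, List.tail_cons, List.nodup_cons,
    List.mem_cons, List.mem_singleton, List.not_mem_nil, or_false, List.nodup_nil,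
    not_or] at hnd
  obtain ⟨⟨h12, h13, h1u⟩, ⟨h23, h2u⟩, h3u, -⟩ := hnd
  obtain ⟨x0, y0⟩ := u
  obtain ⟨x1, y1⟩ := p1
  obtain ⟨x2, y2⟩ := p2
  obtain ⟨x3, y3⟩ := p3
  simp only [ne_eq, Prod.mk.injEq, not_and] at h12 h13 h1u h23 h2u h3u
  have H1 := adj_cases h1
  have H2 := adj_cases h2
  have H3 := adj_cases h3
  have H4 := adj_cases h4
  omega

lemma hex_star_cycle : ∀ (u : ℤ × ℤ) (w : hexGrid.Walk u u), w.length = 4 → w.IsCycle →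
    ¬ ∃ a b : Fin 4, ∀ e ∈ w.edges, hexCol e = a ∨ hexCol e = b :=
  fun u w hl hc => absurd hc (hex_no_4cycle u w hl)

/-! ### Lower bound -/

lemma adj_v {x y y' : ℤ} (h : y' = y + 1) : hexGrid.Adj (x, y) (x, y') := h ▸ adj_up x y

lemma adj_h {x y x' : ℤ} (h : x' = x + 1) (hp : (x + y) % 2 = 0) :
    hexGrid.Adj (x, y) (x', y) := h ▸ adj_right x y hp

lemma prop_ne {k : ℕ} {C : Sym2 (ℤ × ℤ) → Fin k} (hC : IsStarEdgeColoring hexGrid C)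
    {v w w' : ℤ × ℤ} (h : hexGrid.Adj v w) (h' : hexGrid.Adj v w') (hne : w ≠ w') :
    C s(v, w) ≠ C s(v, w') := by
  refine hC.1 _ ((mem_edgeSet _).mpr h) _ ((mem_edgeSet _).mpr h') ?_
    ⟨v, Sym2.mem_mk_left _ _, Sym2.mem_mk_left _ _⟩
  intro hcon
  rw [Sym2.eq_iff] at hcon
  rcases hcon with hcon | hcon
  · exact hne hcon.2
  · exact h'.ne hcon.1

lemma star_path_apply {k : ℕ} {C : Sym2 (ℤ × ℤ) → Fin k} (hC : IsStarEdgeColoring hexGrid C)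
    {p0 p1 p2 p3 p4 : ℤ × ℤ} (h1 : hexGrid.Adj p0 p1) (h2 : hexGrid.Adj p1 p2)
    (h3 : hexGrid.Adj p2 p3) (h4 : hexGrid.Adj p3 p4)
    (hnd : ([p0, p1, p2, p3, p4] : List (ℤ × ℤ)).Nodup) (a b : Fin k)
    (c1 : C s(p0, p1) = a ∨ C s(p0, p1) = b) (c2 : C s(p1, p2) = a ∨ C s(p1, p2) = b)
    (c3 : C s(p2, p3) = a ∨ C s(p2, p3) = b) (c4 : C s(p3, p4) = a ∨ C s(p3, p4) = b) :
    False := by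
  refine hC.2.1 p0 p4 (Walk.cons h1 (Walk.cons h2 (Walk.cons h3 (Walk.cons h4 Walk.nil))))
    (by simp) ?_ ⟨a, b, ?_⟩
  · rw [Walk.isPath_def]
    simpa [Walk.support_cons] using hnd
  · intro e he
    simp only [Walk.edges_cons, Walk.edges_nil, List.mem_cons, List.not_mem_nil,
      or_false] at he
    rcases he with rfl | rfl | rfl | rfl <;> assumption

lemma fin3_cases {p q r s : Fin 3} (hq : q ≠ p) (hr : r ≠ p) (hqr : q ≠ r) (hs : s ≠ p) :
    s = q ∨ s = r := by
  revert p q r s; decide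

lemma no_small3 (C : Sym2 (ℤ × ℤ) → Fin 3) (hC : IsStarEdgeColoring hexGrid C) : False := by
  have A1 : hexGrid.Adj (0, 0) (0, 1) := adj_v (by norm_num)
  have A2 : hexGrid.Adj (0, 0) (0, -1) := (adj_v (x := 0) (y := -1) (by norm_num)).symm
  have B1 : hexGrid.Adj (0, 1) (0, 2) := adj_v (by norm_num)
  have Bg : hexGrid.Adj (0, 1) (-1, 1) :=
    (adj_h (x := -1) (y := 1) (by norm_num) (by norm_num)).symm
  have C1 : hexGrid.Adj (0, 2) (0, 3) := adj_v (by norm_num)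
  have C2 : hexGrid.Adj (0, 2) (1, 2) := adj_h (by norm_num) (by norm_num)
  have D1 : hexGrid.Adj (-1, 1) (-1, 2) := adj_v (by norm_num)
  have D2 : hexGrid.Adj (-1, 1) (-1, 0) := (adj_v (x := -1) (y := 0) (by norm_num)).symm
  -- colors at (0,1)
  have hb1a : C s((0, 1), (0, 2)) ≠ C s((0, 0), (0, 1)) := by
    have := prop_ne hC B1 A1.symm (by simp [Prod.ext_iff])
    rwa [show (s(((0 : ℤ), (1 : ℤ)), ((0 : ℤ), (0 : ℤ)))) = s(((0 : ℤ), (0 : ℤ)), ((0 : ℤ), (1 : ℤ))) from Sym2.eq_swap] at this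
  have hb2a : C s((0, 1), (-1, 1)) ≠ C s((0, 0), (0, 1)) := by
    have := prop_ne hC Bg A1.symm (by simp [Prod.ext_iff])
    rwa [show (s(((0 : ℤ), (1 : ℤ)), ((0 : ℤ), (0 : ℤ)))) = s(((0 : ℤ), (0 : ℤ)), ((0 : ℤ), (1 : ℤ))) from Sym2.eq_swap] at this
  have hb12 : C s((0, 1), (0, 2)) ≠ C s((0, 1), (-1, 1)) :=
    prop_ne hC B1 Bg (by simp [Prod.ext_iff])
  have ha2a : C s((0, 0), (0, -1)) ≠ C s((0, 0), (0, 1)) :=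
    prop_ne hC A2 A1 (by simp [Prod.ext_iff])
  have hcase := fin3_cases hb1a hb2a hb12 ha2a
  -- the first edge of all paths: s((0,-1),(0,0)) has color a2
  have e1swap : (s(((0 : ℤ), (-1 : ℤ)), ((0 : ℤ), (0 : ℤ)))) = s(((0 : ℤ), (0 : ℤ)), ((0 : ℤ), (-1 : ℤ))) := Sym2.eq_swap
  rcases hcase with hcase | hcase
  · -- a2 = C s((0,1),(0,2)) ; continue at w = (0,2)
    have hc1b : C s((0, 2), (0, 3)) ≠ C s((0, 1), (0, 2)) := by
      have := prop_ne hC C1 B1.symm (by simp [Prod.ext_iff])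
      rwa [show (s(((0 : ℤ), (2 : ℤ)), ((0 : ℤ), (1 : ℤ)))) = s(((0 : ℤ), (1 : ℤ)), ((0 : ℤ), (2 : ℤ))) from Sym2.eq_swap] at this
    have hc2b : C s((0, 2), (1, 2)) ≠ C s((0, 1), (0, 2)) := by
      have := prop_ne hC C2 B1.symm (by simp [Prod.ext_iff])
      rwa [show (s(((0 : ℤ), (2 : ℤ)), ((0 : ℤ), (1 : ℤ)))) = s(((0 : ℤ), (1 : ℤ)), ((0 : ℤ), (2 : ℤ))) from Sym2.eq_swap] at this
    have hc12 : C s((0, 2), (0, 3)) ≠ C s((0, 2), (1, 2)) :=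
      prop_ne hC C1 C2 (by simp [Prod.ext_iff])
    have ha1b : C s((0, 0), (0, 1)) ≠ C s((0, 1), (0, 2)) := Ne.symm hb1a
    rcases fin3_cases hc1b hc2b hc12 ha1b with hsub | hsub
    · exact star_path_apply hC A2.symm A1 B1 C1 (by decide)
        (C s((0, 0), (0, 1))) (C s((0, 0), (0, -1)))
        (Or.inr (by rw [e1swap])) (Or.inl rfl) (Or.inr hcase.symm) (Or.inl hsub.symm)
    · exact star_path_apply hC A2.symm A1 B1 C2 (by decide)
        (C s((0, 0), (0, 1))) (C s((0, 0), (0, -1)))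
        (Or.inr (by rw [e1swap])) (Or.inl rfl) (Or.inr hcase.symm) (Or.inl hsub.symm)
  · -- a2 = C s((0,1),(-1,1)) ; continue at w = (-1,1)
    have hd1b : C s((-1, 1), (-1, 2)) ≠ C s((0, 1), (-1, 1)) := by
      have := prop_ne hC D1 Bg.symm (by simp [Prod.ext_iff])
      rwa [show (s(((-1 : ℤ), (1 : ℤ)), ((0 : ℤ), (1 : ℤ)))) = s(((0 : ℤ), (1 : ℤ)), ((-1 : ℤ), (1 : ℤ))) from Sym2.eq_swap] at this
    have hd2b : C s((-1, 1), (-1, 0)) ≠ C s((0, 1), (-1, 1)) := by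
      have := prop_ne hC D2 Bg.symm (by simp [Prod.ext_iff])
      rwa [show (s(((-1 : ℤ), (1 : ℤ)), ((0 : ℤ), (1 : ℤ)))) = s(((0 : ℤ), (1 : ℤ)), ((-1 : ℤ), (1 : ℤ))) from Sym2.eq_swap] at this
    have hd12 : C s((-1, 1), (-1, 2)) ≠ C s((-1, 1), (-1, 0)) :=
      prop_ne hC D1 D2 (by simp [Prod.ext_iff])
    have ha1b : C s((0, 0), (0, 1)) ≠ C s((0, 1), (-1, 1)) := Ne.symm hb2a
    rcases fin3_cases hd1b hd2b hd12 ha1b with hsub | hsub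
    · exact star_path_apply hC A2.symm A1 Bg D1 (by decide)
        (C s((0, 0), (0, 1))) (C s((0, 0), (0, -1)))
        (Or.inr (by rw [e1swap])) (Or.inl rfl) (Or.inr hcase.symm) (Or.inl hsub.symm)
    · exact star_path_apply hC A2.symm A1 Bg D2 (by decide)
        (C s((0, 0), (0, 1))) (C s((0, 0), (0, -1)))
        (Or.inr (by rw [e1swap])) (Or.inl rfl) (Or.inr hcase.symm) (Or.inl hsub.symm)

theorem stmt_17 : starChromaticIndex hexGrid = 4 := by
  have hmem : 4 ∈ {k | ∃ C : Sym2 (ℤ × ℤ) → Fin k, IsStarEdgeColoring hexGrid C} :=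
    ⟨hexCol, hex_proper, hex_star_path, hex_star_cycle⟩
  refine le_antisymm (Nat.sInf_le hmem) (le_csInf ⟨4, hmem⟩ ?_)
  rintro k ⟨C, hC⟩
  by_contra hlt
  push_neg at hlt
  have A1 : hexGrid.Adj (0, 0) (0, 1) := adj_v (by norm_num)
  have A2 : hexGrid.Adj (0, 0) (0, -1) := (adj_v (x := 0) (y := -1) (by norm_num)).symm
  have A3 : hexGrid.Adj (0, 0) (1, 0) := adj_h (by norm_num) (by norm_num)
  have d12 : C s((0, 0), (0, 1)) ≠ C s((0, 0), (0, -1)) :=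
    prop_ne hC A1 A2 (by simp [Prod.ext_iff])
  have d13 : C s((0, 0), (0, 1)) ≠ C s((0, 0), (1, 0)) :=
    prop_ne hC A1 A3 (by simp [Prod.ext_iff])
  have d23 : C s((0, 0), (0, -1)) ≠ C s((0, 0), (1, 0)) :=
    prop_ne hC A2 A3 (by simp [Prod.ext_iff])
  interval_cases k
  · exact (C s((0, 0), (0, 1))).elim0
  · have h1 := (C s((0, 0), (0, 1))).2
    have h2 := (C s((0, 0), (0, -1))).2
    have hv : (C s((0, 0), (0, 1))).1 ≠ (C s((0, 0), (0, -1))).1 :=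
      fun h => d12 (Fin.ext h)
    omega
  · have h1 := (C s((0, 0), (0, 1))).2
    have h2 := (C s((0, 0), (0, -1))).2
    have h3 := (C s((0, 0), (1, 0))).2
    have hv1 : (C s((0, 0), (0, 1))).1 ≠ (C s((0, 0), (0, -1))).1 := fun h => d12 (Fin.ext h)
    have hv2 : (C s((0, 0), (0, 1))).1 ≠ (C s((0, 0), (1, 0))).1 := fun h => d13 (Fin.ext h)
    have hv3 : (C s((0, 0), (0, -1))).1 ≠ (C s((0, 0), (1, 0))).1 := fun h => d23 (Fin.ext h)
    omega
  · exact no_small3 C hC
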